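/- Let R be a DVR with maximal ideal 𝔭 = πR and residue field k, let α be integral over R with monic minimal polynomial P of degree n, A = R[α], and let W ∈ R[X] be monic of degree m with W̄ | P̄ in k[X]. Set M = A + (W(α)/π)A. Then A/πM is isomorphic as an R-module to k[X]/(W̄), which is isomorphic to k^m. -/

import Mathlib

open Polynomial

/-- Let `R` be a DVR with maximal ideal `𝔭 = πR` and residue field `k`, `α`
integral over `R` with monic minimal polynomial `P` of degree `n`, `A = R[α]`, and `W ∈ R[X]`
monic of degree `m` with `W̄ ∣ P̄` in `k[X]`.  With `M = A + (W(α)/π)A` (so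
`πM = πA + W(α)A`), the `R`-module `A ⧸ πM` is isomorphic to `k[X] ⧸ (W̄)`, which is in turn
isomorphic to `k^m`. -/
theorem stmt14 (R : Type*) [CommRing R] [IsDomain R] [IsDiscreteValuationRing R]
    (π : R) (hπ : Irreducible π)
    (K L : Type*) [Field K] [Field L] [Algebra R K] [IsFractionRing R K]
    [Algebra K L] [Algebra R L] [IsScalarTower R K L]
    [FiniteDimensional K L] [Algebra.IsSeparable K L]
    (α : L) (hα : IsIntegral R α) (hgen : Algebra.adjoin K {α} = ⊤)
    (P : R[X]) (hP : P = minpoly R α)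
    (W : R[X]) (hW : W.Monic)
    (hWP : W.map (IsLocalRing.residue R) ∣ P.map (IsLocalRing.residue R))
    (A : Subalgebra R L) (hA : A = Algebra.adjoin R {α})
    (M : Submodule R L)
    (hM : M = Subalgebra.toSubmodule A ⊔
      Submodule.map (LinearMap.mulLeft R (aeval α W * (algebraMap R L π)⁻¹))
        (Subalgebra.toSubmodule A)) :
    Nonempty ((↥(Subalgebra.toSubmodule A) ⧸
        Submodule.comap (Subalgebra.toSubmodule A).subtype
          (Submodule.map (LinearMap.mulLeft R (algebraMap R L π)) M)) ≃ₗ[R]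
      (Polynomial (IsLocalRing.ResidueField R) ⧸
        Ideal.span {W.map (IsLocalRing.residue R)})) ∧
    Nonempty ((↥(Subalgebra.toSubmodule A) ⧸
        Submodule.comap (Subalgebra.toSubmodule A).subtype
          (Submodule.map (LinearMap.mulLeft R (algebraMap R L π)) M)) ≃ₗ[R]
      (Fin W.natDegree → IsLocalRing.ResidueField R)) := by
  classical
  set k := IsLocalRing.ResidueField R with hk
  set res := IsLocalRing.residue R with hres
  have hresmap : algebraMap R k = res := rfl
  -- injectivity of R → L
  have injL : Function.Injective (algebraMap R L) := by
    rw [IsScalarTower.algebraMap_eq R K L]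
    exact (algebraMap K L).injective.comp (IsFractionRing.injective R K)
  have : NoZeroSMulDivisors R L := 
    ⟨fun {c x} h => by rwa [Algebra.smul_def, mul_eq_zero, map_eq_zero_iff _ injL] at h⟩
  have hπL : algebraMap R L π ≠ 0 := by
    simpa [map_eq_zero_iff _ injL] using hπ.ne_zero
  -- the generator inside A
  have hαA : α ∈ A := by rw [hA]; exact Algebra.self_mem_adjoin_singleton R α
  set a : ↥A := ⟨α, hαA⟩ with ha
  set φ : R[X] →ₐ[R] ↥A := aeval a with hφ
  have coeφ : ∀ f : R[X], ((φ f : ↥A) : L) = aeval α f := by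
    intro f
    rw [hφ]
    exact (Subalgebra.aeval_coe A a f).symm
  have φsurj : Function.Surjective φ := by
    rintro ⟨y, hy⟩
    have hy' : y ∈ Algebra.adjoin R ({α} : Set L) := hA ▸ hy
    rw [Algebra.adjoin_singleton_eq_range_aeval] at hy'
    obtain ⟨f, hf⟩ := hy'
    exact ⟨f, Subtype.ext (by rw [coeφ]; exact hf)⟩
  have kerφ : ∀ f : R[X], φ f = 0 ↔ P ∣ f := by
    intro f
    rw [hP]
    constructor
    · intro h
      have : aeval α f = 0 := by
        rw [← coeφ, h]; rfl
      exact minpoly.isIntegrallyClosed_dvd hα this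
    · rintro ⟨g, rfl⟩
      apply Subtype.ext
      rw [coeφ, map_mul, minpoly.aeval, zero_mul]
      rfl
  -- the ideal (π, W) in R[X]
  set I : Ideal R[X] := Ideal.span {C π, W} with hI
  set Q := (Polynomial k ⧸ Ideal.span {W.map res}) with hQ
  set Ψ : R[X] →ₐ[R] Q :=
    (Ideal.Quotient.mkₐ R (Ideal.span {W.map res})).comp (mapAlgHom (Algebra.ofId R k)) with hΨ
  have Ψapply : ∀ f : R[X], Ψ f = Ideal.Quotient.mk _ (f.map res) := fun f => rfl
  have ressurj : Function.Surjective res := Ideal.Quotient.mk_surjective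
  have mapsurj : Function.Surjective (Polynomial.map res : R[X] → Polynomial k) :=
    fun p => Polynomial.map_surjective res ressurj p
  have Ψsurj : Function.Surjective Ψ := by
    intro q
    obtain ⟨p, rfl⟩ := Ideal.Quotient.mk_surjective q
    obtain ⟨f, rfl⟩ := mapsurj p
    exact ⟨f, rfl⟩
  have kermapres : RingHom.ker (mapRingHom res) = Ideal.span {C π} := by
    rw [Polynomial.ker_mapRingHom, IsLocalRing.ker_residue, hπ.maximalIdeal_eq,
      Ideal.map_span, Set.image_singleton]
  have kerΨ : ∀ f : R[X], Ψ f = 0 ↔ f ∈ I := by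
    intro f
    constructor
    · intro h
      rw [Ψapply, Ideal.Quotient.eq_zero_iff_mem, Ideal.mem_span_singleton] at h
      obtain ⟨q', hq'⟩ := h
      obtain ⟨q, rfl⟩ := mapsurj q'
      have h2 : (f - W * q) ∈ Ideal.span {C π} := by
        rw [← kermapres, RingHom.mem_ker, coe_mapRingHom, Polynomial.map_sub,
          Polynomial.map_mul, ← hq', sub_self]
      have : f = (f - W * q) + W * q := by ring
      rw [this]
      exact I.add_mem (Ideal.span_mono (by simp) h2)
        (I.mul_mem_right q (Ideal.subset_span (by simp)))
    · intro hf
      rw [hI, Ideal.mem_span_pair] at hf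
      obtain ⟨u, v, rfl⟩ := hf
      have h1 : Ψ (C π) = 0 := by
        rw [Ψapply, Polynomial.map_C]
        have : res π = 0 := by
          rw [← RingHom.mem_ker, IsLocalRing.ker_residue, hπ.maximalIdeal_eq]
          exact Ideal.mem_span_singleton_self π
        rw [this, Polynomial.C_0, map_zero]
      have h2 : Ψ W = 0 := by
        rw [Ψapply, Ideal.Quotient.eq_zero_iff_mem]
        exact Ideal.subset_span rfl
      rw [map_add, map_mul, map_mul, h1, h2, mul_zero, mul_zero, add_zero]
  have hPI : P ∈ I := by
    rw [← kerΨ, Ψapply, Ideal.Quotient.eq_zero_iff_mem, Ideal.mem_span_singleton]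
    exact hWP
  -- computing the submodule
  set A' := Subalgebra.toSubmodule A with hA'
  set N := Submodule.comap A'.subtype
      (Submodule.map (LinearMap.mulLeft R (algebraMap R L π)) M) with hN
  have hmapM : Submodule.map (LinearMap.mulLeft R (algebraMap R L π)) M
      = Submodule.map (LinearMap.mulLeft R (algebraMap R L π)) A'
        ⊔ Submodule.map (LinearMap.mulLeft R (aeval α W)) A' := by
    rw [hM, Submodule.map_sup, ← Submodule.map_comp, ← LinearMap.mulLeft_mul]
    congr 2
    field_simp
  have memN : ∀ y : ↥A', y ∈ N ↔ ∃ u ∈ A', ∃ v ∈ A',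
      (y : L) = algebraMap R L π * u + aeval α W * v := by
    intro y
    rw [hN, Submodule.mem_comap, hmapM, Submodule.mem_sup]
    constructor
    · rintro ⟨z, hz, w, hw, hzw⟩
      obtain ⟨u, hu, rfl⟩ := hz
      obtain ⟨v, hv, rfl⟩ := hw
      exact ⟨u, hu, v, hv, hzw.symm⟩
    · rintro ⟨u, hu, v, hv, h⟩
      exact ⟨_, ⟨u, hu, rfl⟩, _, ⟨v, hv, rfl⟩, h.symm⟩
  set ρ : R[X] →ₗ[R] (↥A' ⧸ N) := N.mkQ ∘ₗ φ.toLinearMap with hρ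
  have ρsurj : Function.Surjective ρ := N.mkQ_surjective.comp φsurj
  have aevalmem : ∀ f : R[X], aeval α f ∈ A' := by
    intro f
    show aeval α f ∈ A
    rw [hA, Algebra.adjoin_singleton_eq_range_aeval]
    exact ⟨f, rfl⟩
  have kerρ : LinearMap.ker ρ = I.restrictScalars R := by
    ext f
    have hrf : ρ f = Submodule.Quotient.mk (φ f) := rfl
    rw [LinearMap.mem_ker, hrf, Submodule.Quotient.mk_eq_zero, Submodule.restrictScalars_mem, memN]
    constructor
    · rintro ⟨u, hu, v, hv, h⟩
      have hu' : u ∈ Algebra.adjoin R ({α} : Set L) := hA ▸ hu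
      have hv' : v ∈ Algebra.adjoin R ({α} : Set L) := hA ▸ hv
      rw [Algebra.adjoin_singleton_eq_range_aeval] at hu' hv'
      obtain ⟨g, hg⟩ := hu'
      obtain ⟨h', hh⟩ := hv'
      rw [coeφ] at h
      have : aeval α (f - (C π * g + W * h')) = 0 := by
        rw [map_sub, map_add, map_mul, map_mul, aeval_C,
          show (aeval α) g = u from hg, show (aeval α) h' = v from hh, h]
        ring
      have hdvd : P ∣ f - (C π * g + W * h') := hP ▸ minpoly.isIntegrallyClosed_dvd hα this
      obtain ⟨t, ht⟩ := hdvd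
      have : f = P * t + C π * g + W * h' := by rw [← ht]; ring
      rw [this]
      exact I.add_mem (I.add_mem (I.mul_mem_right t hPI)
        (I.mul_mem_right g (Ideal.subset_span (by simp))))
        (I.mul_mem_right h' (Ideal.subset_span (by simp)))
    · intro hf
      rw [hI, Ideal.mem_span_pair] at hf
      obtain ⟨u, v, rfl⟩ := hf
      refine ⟨aeval α u, aevalmem u, aeval α v, aevalmem v, ?_⟩
      rw [coeφ, map_add, map_mul, map_mul, aeval_C]
      ring
  have kerΨl : LinearMap.ker Ψ.toLinearMap = I.restrictScalars R := by
    ext f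
    rw [LinearMap.mem_ker, Submodule.restrictScalars_mem]
    exact kerΨ f
  have e1 : (↥A' ⧸ N) ≃ₗ[R] Q :=
    (LinearMap.quotKerEquivOfSurjective ρ ρsurj).symm ≪≫ₗ
      Submodule.quotEquivOfEq _ _ (kerρ.trans kerΨl.symm) ≪≫ₗ
      LinearMap.quotKerEquivOfSurjective Ψ.toLinearMap Ψsurj
  refine ⟨⟨e1⟩, ⟨e1 ≪≫ₗ ?_⟩⟩
  -- Q ≃ₗ[R] Fin W.natDegree → k
  have hWm : (W.map res).Monic := hW.map res
  have hWne : W.map res ≠ 0 := hWm.ne_zero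
  have hdeg : (W.map res).natDegree = W.natDegree := hW.natDegree_map res
  have e2 : AdjoinRoot (W.map res) ≃ₗ[k] (Fin W.natDegree → k) :=
    (AdjoinRoot.powerBasis hWne).basis.equivFun ≪≫ₗ
      LinearEquiv.funCongrLeft k k (finCongr hdeg.symm)
  exact (LinearEquiv.restrictScalars R e2 : AdjoinRoot (W.map res) ≃ₗ[R] (Fin W.natDegree → k))
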